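/- For all real numbers r, t, one has r^2 + rt + t^2 - r - t + 1 ≥ 0 and more generally for the inequality used for the pencil C_n: for n sufficiently large, every real point (r, t) on the affine conic n^2(-r^2 + 2rt - r - t^2 + t - 1) + r^2 + rt - 2r + t^2 - t + 1 = 0 satisfies 3t^2 - 3tr + r^2 + 2r - 2 > 0. -/
import Mathlib


/-- For all real `r, t` one has `r² + rt + t² - r - t + 1 ≥ 0`; and for all
sufficiently large `n`, every real point `(r,t)` of the affine conic
`n²(-r² + 2rt - r - t² + t - 1) + r² + rt - 2r + t² - t + 1 = 0` satisfies
`3t² - 3tr + r² + 2r - 2 > 0`. -/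
theorem conic_avoids_ellipse :
    (∀ r t : ℝ, 0 ≤ r ^ 2 + r * t + t ^ 2 - r - t + 1) ∧
    (∃ N : ℕ, ∀ n : ℕ, N ≤ n → ∀ r t : ℝ,
      (n : ℝ) ^ 2 * (-r ^ 2 + 2 * r * t - r - t ^ 2 + t - 1) +
        r ^ 2 + r * t - 2 * r + t ^ 2 - t + 1 = 0 →
      0 < 3 * t ^ 2 - 3 * t * r + r ^ 2 + 2 * r - 2) := by
  constructor
  · intro r t
    nlinarith [sq_nonneg (r + t - 1), sq_nonneg (r - t), sq_nonneg (r + t)]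
  · refine ⟨100, fun n hn r t heq => ?_⟩
    by_contra h2
    push_neg at h2
    have hn' : (100 : ℝ) ≤ (n : ℝ) := by exact_mod_cast hn
    have hA : -r ^ 2 + 2 * r * t - r - t ^ 2 + t - 1 ≤ -3/4 := by
      nlinarith [sq_nonneg (2*r - 2*t + 1)]
    -- bounds on r and t from the ellipse region
    have hr : r ^ 2 ≤ 8 - 8 * r := by nlinarith [sq_nonneg (2*t - r)]
    have hrlb : -10 ≤ r := by nlinarith
    have hrub : r ≤ 1 := by nlinarith
    have ht : 3 * (t - r/2) ^ 2 ≤ 2 - 2 * r + 20 := by nlinarith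
    have hQ : r ^ 2 + r * t - 2 * r + t ^ 2 - t + 1 ≤ 2000 := by
      nlinarith [sq_nonneg (t - r/2), sq_nonneg (t + 1), sq_nonneg (r + t), sq_nonneg (r - t)]
    have hn2 : (n : ℝ) ^ 2 ≥ 10000 := by nlinarith
    nlinarith [mul_le_mul_of_nonneg_left hA (sq_nonneg (n:ℝ))]
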